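/- For each i = 1,...,p let χ^i = s_i ∂/∂s_i be the i-th partial Euler derivation of k[[s]]_Δ, and let ε^i(r) = r* χ^i_R(r) for r ∈ U^p(R;Δ). Then for all i, j = 1,...,p: χ^j_R(ε^i(r)) − χ^i_R(ε^j(r)) = [ε^i(r), ε^j(r)]. -/

import Mathlib

def IsCoideal {p : ℕ} (Δ : Set (Fin p →₀ ℕ)) : Prop :=
  Δ.Nonempty ∧ ∀ α ∈ Δ, ∀ β ≤ α, β ∈ Δ

def EqOnD {p : ℕ} {R : Type*} [Ring R] (Δ : Set (Fin p →₀ ℕ))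
    (f g : MvPowerSeries (Fin p) R) : Prop :=
  ∀ α ∈ Δ, MvPowerSeries.coeff α f = MvPowerSeries.coeff α g

/-- The `i`-th partial Euler derivation `χ^i = s_i ∂/∂s_i`, acting coefficientwise on
`R[[s]]` by multiplying the coefficient of `s^α` by `α_i`. -/
noncomputable def chi {p : ℕ} {R : Type*} [Ring R] (i : Fin p)
    (f : MvPowerSeries (Fin p) R) : MvPowerSeries (Fin p) R :=
  fun α => (α i) • MvPowerSeries.coeff α f

section Aux
variable {p : ℕ} {R : Type*} [Ring R] {Δ : Set (Fin p →₀ ℕ)}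
  {f g f' g' : MvPowerSeries (Fin p) R}

lemma coeff_chi (i : Fin p) (f : MvPowerSeries (Fin p) R) (α : Fin p →₀ ℕ) :
    MvPowerSeries.coeff α (chi i f) = (α i) • MvPowerSeries.coeff α f := rfl

lemma chi_one (i : Fin p) : chi i (1 : MvPowerSeries (Fin p) R) = 0 := by
  ext α
  rw [coeff_chi, MvPowerSeries.coeff_one]
  by_cases h : α = 0 <;> simp [h]

lemma chi_mul (i : Fin p) (f g : MvPowerSeries (Fin p) R) :
    chi i (f * g) = chi i f * g + f * chi i g := by
  ext α
  rw [coeff_chi, map_add, MvPowerSeries.coeff_mul, MvPowerSeries.coeff_mul,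
      MvPowerSeries.coeff_mul, Finset.smul_sum, ← Finset.sum_add_distrib]
  refine Finset.sum_congr rfl fun x hx => ?_
  rw [Finset.HasAntidiagonal.mem_antidiagonal] at hx
  rw [coeff_chi, coeff_chi, smul_mul_assoc, mul_smul_comm, ← hx, Finsupp.add_apply, add_smul]

lemma chi_comm (i j : Fin p) (f : MvPowerSeries (Fin p) R) :
    chi j (chi i f) = chi i (chi j f) := by
  ext α
  rw [coeff_chi, coeff_chi, coeff_chi, coeff_chi, smul_smul, smul_smul, mul_comm]

lemma EqOnD.chi_congr (h : EqOnD Δ f g) (i : Fin p) : EqOnD Δ (chi i f) (chi i g) :=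
  fun α hα => by rw [coeff_chi, coeff_chi, h α hα]

lemma EqOnD.sub' (h1 : EqOnD Δ f g) (h2 : EqOnD Δ f' g') : EqOnD Δ (f - f') (g - g') :=
  fun α hα => by rw [map_sub, map_sub, h1 α hα, h2 α hα]

lemma EqOnD.add' (h1 : EqOnD Δ f g) (h2 : EqOnD Δ f' g') : EqOnD Δ (f + f') (g + g') :=
  fun α hα => by rw [map_add, map_add, h1 α hα, h2 α hα]

lemma EqOnD.symm' (h : EqOnD Δ f g) : EqOnD Δ g f := fun α hα => (h α hα).symm

lemma EqOnD.trans' (h1 : EqOnD Δ f g) (h2 : EqOnD Δ g f') : EqOnD Δ f f' :=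
  fun α hα => (h1 α hα).trans (h2 α hα)

lemma EqOnD.refl' (f : MvPowerSeries (Fin p) R) : EqOnD Δ f f := fun _ _ => rfl

lemma EqOnD.mul_left' (hΔ : IsCoideal Δ) (h : EqOnD Δ f g) (c : MvPowerSeries (Fin p) R) :
    EqOnD Δ (c * f) (c * g) := by
  intro α hα
  rw [MvPowerSeries.coeff_mul, MvPowerSeries.coeff_mul]
  refine Finset.sum_congr rfl fun x hx => ?_
  rw [Finset.HasAntidiagonal.mem_antidiagonal] at hx
  rw [h x.2 (hΔ.2 α hα x.2 (hx ▸ le_add_self))]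

lemma EqOnD.mul_right' (hΔ : IsCoideal Δ) (h : EqOnD Δ f g) (c : MvPowerSeries (Fin p) R) :
    EqOnD Δ (f * c) (g * c) := by
  intro α hα
  rw [MvPowerSeries.coeff_mul, MvPowerSeries.coeff_mul]
  refine Finset.sum_congr rfl fun x hx => ?_
  rw [Finset.HasAntidiagonal.mem_antidiagonal] at hx
  rw [h x.1 (hΔ.2 α hα x.1 (hx ▸ self_le_add_right _ _))]

/-- `χ^m rs ≡ -(rs * χ^m r * rs)` on `Δ`. -/
lemma chi_inv (hΔ : IsCoideal Δ) {r rs : MvPowerSeries (Fin p) R}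
    (hr1 : EqOnD Δ (r * rs) 1) (hr2 : EqOnD Δ (rs * r) 1) (m : Fin p) :
    EqOnD Δ (chi m rs) (-(rs * chi m r * rs)) := by
  have h1 : EqOnD Δ (chi m rs * r + rs * chi m r) 0 := by
    have := hr2.chi_congr m
    rwa [chi_mul, chi_one] at this
  have h1' : EqOnD Δ (chi m rs * r) (-(rs * chi m r)) := by
    intro α hα
    have h := h1 α hα
    rw [map_add, map_zero] at h
    rw [map_neg]
    exact eq_neg_of_add_eq_zero_left h
  have e1 : EqOnD Δ (chi m rs * (r * rs)) (chi m rs) := by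
    have := (EqOnD.mul_left' hΔ hr1 (chi m rs))
    rwa [mul_one] at this
  have e3 : EqOnD Δ (chi m rs * r * rs) (-(rs * chi m r) * rs) :=
    EqOnD.mul_right' hΔ h1' rs
  have e3' : EqOnD Δ (chi m rs * (r * rs)) (-(rs * chi m r) * rs) := by
    rw [← mul_assoc]; exact e3
  have := e1.symm'.trans' e3'
  rwa [neg_mul] at this

end Aux

/-- With `ε^i(r) = r* χ^i_R(r)`: `χ^j_R(ε^i(r)) − χ^i_R(ε^j(r)) = [ε^i(r), ε^j(r)]`. -/
theorem chi_eps_crossed {p : ℕ} {k R : Type*} [CommRing k] [Ring R] [Algebra k R]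
    (Δ : Set (Fin p →₀ ℕ)) (hΔ : IsCoideal Δ)
    (r rs : MvPowerSeries (Fin p) R)
    (hr0 : MvPowerSeries.coeff 0 r = 1)
    (hr1 : EqOnD Δ (r * rs) 1) (hr2 : EqOnD Δ (rs * r) 1)
    (i j : Fin p) :
    EqOnD Δ (chi j (rs * chi i r) - chi i (rs * chi j r))
      ((rs * chi i r) * (rs * chi j r) - (rs * chi j r) * (rs * chi i r)) := by
  set A := chi i r with hA
  set B := chi j r with hB
  have hEj : EqOnD Δ (chi j (rs * A)) (-(rs * B * rs) * A + rs * chi j A) := by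
    rw [chi_mul]
    exact ((chi_inv hΔ hr1 hr2 j).mul_right' hΔ A).add' (EqOnD.refl' _)
  have hEi : EqOnD Δ (chi i (rs * B)) (-(rs * A * rs) * B + rs * chi i B) := by
    rw [chi_mul]
    exact ((chi_inv hΔ hr1 hr2 i).mul_right' hΔ B).add' (EqOnD.refl' _)
  have hfin := hEj.sub' hEi
  have hcomm : chi j A = chi i B := chi_comm i j r
  have : (-(rs * B * rs) * A + rs * chi j A) - (-(rs * A * rs) * B + rs * chi i B)
      = (rs * A) * (rs * B) - (rs * B) * (rs * A) := by
    rw [hcomm]; noncomm_ring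
  rwa [this] at hfin
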